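/- Suppose the evader moves on the ellipse X²/a² + Y²/b² = 1 counterclockwise with unit speed and velocity direction φ, i.e. (X', Y') = (cos φ, sin φ). Then the position can be expressed as X = a²·sin φ / √(a²sin²φ + b²cos²φ) and Y = −b²·cos φ / √(a²sin²φ + b²cos²φ). -/

import Mathlib

open Real

/-- If the evader moves counterclockwise on the ellipse `X²/a² + Y²/b² = 1` with unit
speed and velocity direction `φ`, then its position is
`X = a²sinφ/√(a²sin²φ + b²cos²φ)`, `Y = −b²cosφ/√(a²sin²φ + b²cos²φ)`. -/
theorem ellipse_position_from_direction (a b : ℝ) (ha : 0 < a) (hb : 0 < b) (hab : a ≠ b)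
    (X Y φ : ℝ → ℝ)
    (hX : Differentiable ℝ X) (hY : Differentiable ℝ Y) (hφ : Differentiable ℝ φ)
    (hell : ∀ t, X t ^ 2 / a ^ 2 + Y t ^ 2 / b ^ 2 = 1)
    (hXv : ∀ t, deriv X t = Real.cos (φ t))
    (hYv : ∀ t, deriv Y t = Real.sin (φ t))
    (hccw : ∀ t, X t * deriv Y t - Y t * deriv X t > 0) :
    ∀ t, X t = a ^ 2 * Real.sin (φ t) /
        Real.sqrt (a ^ 2 * Real.sin (φ t) ^ 2 + b ^ 2 * Real.cos (φ t) ^ 2) ∧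
      Y t = -(b ^ 2 * Real.cos (φ t)) /
        Real.sqrt (a ^ 2 * Real.sin (φ t) ^ 2 + b ^ 2 * Real.cos (φ t) ^ 2) := by
  intro t
  have ha2 : (a:ℝ)^2 ≠ 0 := by positivity
  have hb2 : (b:ℝ)^2 ≠ 0 := by positivity
  have hXd : HasDerivAt X (Real.cos (φ t)) t := by
    have := (hX t).hasDerivAt; rwa [hXv t] at this
  have hYd : HasDerivAt Y (Real.sin (φ t)) t := by
    have := (hY t).hasDerivAt; rwa [hYv t] at this
  -- derivative of the constraint
  have hder := ((hXd.pow 2).div_const (a^2)).add ((hYd.pow 2).div_const (b^2))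
  have hconst : HasDerivAt (fun t => X t ^ 2 / a ^ 2 + Y t ^ 2 / b ^ 2) 0 t := by
    have he : (fun t => X t ^ 2 / a ^ 2 + Y t ^ 2 / b ^ 2) = fun _ => (1:ℝ) :=
      funext hell
    rw [he]; exact hasDerivAt_const _ _
  have h0 := hder.unique hconst
  set c := Real.cos (φ t) with hc
  set s := Real.sin (φ t) with hs
  set u := X t with hu
  set v := Y t with hv
  have h1 : u * c * b ^ 2 + v * s * a ^ 2 = 0 := by
    field_simp at h0
    norm_num at h0
    nlinarith [h0]
  have hw : u * s - v * c > 0 := by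
    have := hccw t
    rw [hXv t, hYv t] at this
    linarith
  have pyth : s ^ 2 + c ^ 2 = 1 := Real.sin_sq_add_cos_sq (φ t)
  set S := a ^ 2 * s ^ 2 + b ^ 2 * c ^ 2 with hSdef
  have hS : 0 < S := by
    rcases le_total (a ^ 2) (b ^ 2) with h | h
    · have := mul_nonneg (sub_nonneg.mpr h) (sq_nonneg c)
      nlinarith [pow_pos ha 2]
    · have := mul_nonneg (sub_nonneg.mpr h) (sq_nonneg s)
      nlinarith [pow_pos hb 2]
  have hell' : u ^ 2 * b ^ 2 + v ^ 2 * a ^ 2 = a ^ 2 * b ^ 2 := by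
    have := hell t
    field_simp at this
    linarith [this]
  set w := u * s - v * c with hwdef
  have hSu : S * u = a ^ 2 * s * w := by rw [hwdef, hSdef]; linear_combination c * h1
  have hSv : S * v = -(b ^ 2 * c) * w := by rw [hwdef, hSdef]; linear_combination s * h1
  have hw2 : w ^ 2 = S := by
    have key : a ^ 2 * b ^ 2 * S * (w ^ 2 - S) = 0 := by
      linear_combination (-(b^2) * (S*u + a^2*s*w)) * hSu + (-(a^2) * (S*v - b^2*c*w)) * hSv
        + S^2 * hell'
    have hne : a ^ 2 * b ^ 2 * S ≠ 0 := by positivity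
    have := mul_eq_zero.mp key
    rcases this with h | h
    · exact absurd h hne
    · linarith
  have hr : Real.sqrt S = w := by
    rw [← hw2, Real.sqrt_sq hw.le]
  have hwne : w ≠ 0 := ne_of_gt hw
  have hu' : u * w = a ^ 2 * s := by
    have hkey : w * (u * w - a ^ 2 * s) = 0 := by linear_combination hSu + u * hw2
    rcases mul_eq_zero.mp hkey with h | h
    · exact absurd h hwne
    · linarith
  have hv' : v * w = -(b ^ 2 * c) := by
    have hkey : w * (v * w + b ^ 2 * c) = 0 := by linear_combination hSv + v * hw2
    rcases mul_eq_zero.mp hkey with h | h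
    · exact absurd h hwne
    · linarith
  constructor
  · rw [hr]
    field_simp
    linear_combination hu'
  · rw [hr]
    field_simp
    linear_combination hv'
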